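/- Let p be a prime and F a field of characteristic p. Let G be a finite group, H a subgroup of G, and K a normal subgroup of G such that G = HK and p does not divide the index [K : H ∩ K]. Let E be a finite-dimensional F[H]-module on which H ∩ K acts trivially. Then the induced module Ind_H^G(E) decomposes as a direct sum Y ⊕ Y' of F[G]-modules, where K acts trivially on Y and the restriction of Y to H is isomorphic to E. Moreover, if E is indecomposable then Y is indecomposable. -/

import Mathlib

set_option linter.unusedSectionVars false
set_option linter.unusedVariables false
set_option maxHeartbeats 1600000


open CategoryTheory Limits Pointwise

variable {F : Type} [Field F] {G : Type} [Group G]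

/-- The relations defining `F[G] ⊗_{F[H]} E`: `(g h) ⊗ v = g ⊗ (h ⬝ v)`. -/
noncomputable def indRel (H : Subgroup G) (E : Rep F H) : Submodule F (G →₀ E) :=
  Submodule.span F {x : G →₀ E | ∃ (g : G) (h : H) (v : E),
    x = Finsupp.single (g * (h : G)) v - Finsupp.single g (E.ρ h v)}

/-- Left translation by `g₀` on `F[G] ⊗_F E`. -/
noncomputable def indMap (H : Subgroup G) (E : Rep F H) (g₀ : G) :
    (G →₀ E) →ₗ[F] (G →₀ E) :=
  Finsupp.lmapDomain E F (fun g => g₀ * g)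

lemma indRel_le (H : Subgroup G) (E : Rep F H) (g₀ : G) :
    indRel H E ≤ (indRel H E).comap (indMap H E g₀) := by
  rw [indRel, Submodule.span_le]
  rintro x ⟨g, h, v, rfl⟩
  simp only [SetLike.mem_coe, Submodule.mem_comap, map_sub, indMap, Finsupp.lmapDomain_apply,
    Finsupp.mapDomain_single]
  exact Submodule.subset_span ⟨g₀ * g, h, v, by rw [mul_assoc]⟩

/-- The representation of `G` on `F[G] ⊗_{F[H]} E` by left translation. -/
noncomputable def indρ (H : Subgroup G) (E : Rep F H) :
    Representation F G ((G →₀ E) ⧸ indRel H E) where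
  toFun g₀ := Submodule.mapQ _ _ (indMap H E g₀) (indRel_le H E g₀)
  map_one' := by
    apply Submodule.linearMap_qext
    ext g v
    simp [indMap, Submodule.mapQ_apply]
  map_mul' g₁ g₂ := by
    apply Submodule.linearMap_qext
    ext g v
    simp [indMap, Submodule.mapQ_apply, mul_assoc]

/-- The induced module `Ind_H^G E = F[G] ⊗_{F[H]} E`. -/
noncomputable def ind (H : Subgroup G) (E : Rep F H) : Rep F G := Rep.of (indρ H E)

/-- A representation is indecomposable if it is nonzero and in any decomposition
as a direct sum of two representations, one factor is zero. -/
def RepIndecomposable {F : Type} [Field F] {G : Type} [Group G] (M : Rep F G) : Prop :=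
  ¬ IsZero M ∧ ∀ X Y : Rep F G, Nonempty (M ≅ X ⊞ Y) → IsZero X ∨ IsZero Y

lemma indρ_mk_single (H : Subgroup G) (E : Rep F H) (g₀ g : G) (v : E) :
    indρ H E g₀ (Submodule.Quotient.mk (Finsupp.single g v))
      = Submodule.Quotient.mk (Finsupp.single (g₀ * g) v) := by
  have e : indρ H E g₀ (Submodule.Quotient.mk (Finsupp.single g v))
      = Submodule.mapQ _ _ (indMap H E g₀) (indRel_le H E g₀)
        (Submodule.Quotient.mk (Finsupp.single g v)) := rfl
  rw [e, Submodule.mapQ_apply, indMap, Finsupp.lmapDomain_apply, Finsupp.mapDomain_single]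


lemma exists_decomp (H K : Subgroup G) (hHK : (H : Set G) * (K : Set G) = Set.univ) (g : G) :
    ∃ h : H, (h : G)⁻¹ * g ∈ K := by
  have hg : g ∈ (H : Set G) * (K : Set G) := by rw [hHK]; trivial
  obtain ⟨h, hh, k, hk, e⟩ := hg
  exact ⟨⟨h, hh⟩, by rw [← e]; simpa using hk⟩

noncomputable def hpart (H K : Subgroup G) (hHK : (H : Set G) * (K : Set G) = Set.univ) (g : G) :
    H := (exists_decomp H K hHK g).choose

lemma hpart_spec (H K : Subgroup G) (hHK : (H : Set G) * (K : Set G) = Set.univ) (g : G) :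
    ((hpart H K hHK g : H) : G)⁻¹ * g ∈ K :=
  (exists_decomp H K hHK g).choose_spec

noncomputable def tρ (H K : Subgroup G) (E : Rep F H)
    (hHK : (H : Set G) * (K : Set G) = Set.univ) (g : G) : E →ₗ[F] E :=
  E.ρ (hpart H K hHK g)

section
variable (H K : Subgroup G) [K.Normal] (E : Rep F H)
    (hHK : (H : Set G) * (K : Set G) = Set.univ)
    (htriv : ∀ h : H, (h : G) ∈ K → E.ρ h = 1)
include htriv

lemma tρ_eq (g : G) (h : H) (hh : (h : G)⁻¹ * g ∈ K) : tρ H K E hHK g = E.ρ h := by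
  have h1 := hpart_spec H K hHK g
  set h' := hpart H K hHK g
  have hmem : ((h⁻¹ * h' : H) : G) ∈ K := by
    have : ((h : G)⁻¹ * g) * (((h' : G))⁻¹ * g)⁻¹ ∈ K := K.mul_mem hh (K.inv_mem h1)
    simpa [mul_assoc] using this
  have e1 : E.ρ (h⁻¹ * h') = 1 := htriv (h⁻¹ * h') hmem
  calc tρ H K E hHK g = E.ρ h' := rfl
    _ = E.ρ (h * (h⁻¹ * h')) := by rw [mul_inv_cancel_left]
    _ = E.ρ h := by rw [map_mul, e1, mul_one]

lemma tρ_coe (h : H) : tρ H K E hHK (h : G) = E.ρ h :=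
  tρ_eq H K E hHK htriv _ h (by simpa using K.one_mem)

lemma tρ_one : tρ H K E hHK 1 = 1 := by
  have := tρ_coe H K E hHK htriv 1
  simpa using this

lemma tρ_mem (k : G) (hk : k ∈ K) : tρ H K E hHK k = 1 := by
  have := tρ_eq H K E hHK htriv k 1 (by simpa using hk)
  simpa using this

lemma tρ_mul (g₁ g₂ : G) :
    tρ H K E hHK (g₁ * g₂) = tρ H K E hHK g₁ * tρ H K E hHK g₂ := by
  obtain ⟨h₁, hh₁⟩ := exists_decomp H K hHK g₁
  obtain ⟨h₂, hh₂⟩ := exists_decomp H K hHK g₂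
  have hmem : ((h₁ * h₂ : H) : G)⁻¹ * (g₁ * g₂) ∈ K := by
    have e : ((h₁ * h₂ : H) : G)⁻¹ * (g₁ * g₂)
        = ((h₂ : G)⁻¹ * ((h₁ : G)⁻¹ * g₁) * (h₂ : G)) * ((h₂ : G)⁻¹ * g₂) := by
      simp [mul_assoc]
    rw [e]
    exact K.mul_mem (Subgroup.Normal.conj_mem' ‹K.Normal› _ hh₁ _) hh₂
  rw [tρ_eq H K E hHK htriv g₁ h₁ hh₁, tρ_eq H K E hHK htriv g₂ h₂ hh₂,
    tρ_eq H K E hHK htriv (g₁ * g₂) (h₁ * h₂) hmem, map_mul]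

/-- The extension of `E` to a representation of `G`. -/
noncomputable def tRep : Representation F G E where
  toFun := tρ H K E hHK
  map_one' := tρ_one H K E hHK htriv
  map_mul' := tρ_mul H K E hHK htriv

lemma tρ_inv_cancel (g : G) (v : E) : tρ H K E hHK g (tρ H K E hHK g⁻¹ v) = v := by
  have : tρ H K E hHK g * tρ H K E hHK g⁻¹ = 1 := by
    rw [← tρ_mul H K E hHK htriv, mul_inv_cancel, tρ_one H K E hHK htriv]
  calc tρ H K E hHK g (tρ H K E hHK g⁻¹ v)
      = (tρ H K E hHK g * tρ H K E hHK g⁻¹) v := rfl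
    _ = v := by rw [this]; rfl

/-- The evaluation map `F[G] ⊗ E → Ẽ`. -/
noncomputable def pi0 : (G →₀ E) →ₗ[F] E := Finsupp.lsum F (fun g => tρ H K E hHK g)

lemma pi0_single (g : G) (v : E) : pi0 H K E hHK (Finsupp.single g v)
    = tρ H K E hHK g v := Finsupp.lsum_single F _ g v

lemma indRel_le_ker : indRel H E ≤ LinearMap.ker (pi0 H K E hHK) := by
  rw [indRel, Submodule.span_le]
  rintro x ⟨g, h, v, rfl⟩
  simp only [SetLike.mem_coe, LinearMap.mem_ker, map_sub]
  rw [pi0_single H K E hHK htriv, pi0_single H K E hHK htriv,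
    tρ_mul H K E hHK htriv, tρ_coe H K E hHK htriv]
  simp

/-- The evaluation map on the quotient. -/
noncomputable def piQ : ((G →₀ E) ⧸ indRel H E) →ₗ[F] E :=
  Submodule.liftQ _ (pi0 H K E hHK) (indRel_le_ker H K E hHK htriv)

lemma piQ_mk_single (g : G) (v : E) :
    piQ H K E hHK htriv (Submodule.Quotient.mk (Finsupp.single g v)) = tρ H K E hHK g v := by
  rw [piQ, Submodule.liftQ_apply, pi0_single H K E hHK htriv]

lemma piQ_equivariant (g₀ : G) (x : (G →₀ E) ⧸ indRel H E) :
    piQ H K E hHK htriv (indρ H E g₀ x) = tρ H K E hHK g₀ (piQ H K E hHK htriv x) := by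
  induction x using Submodule.Quotient.induction_on with
  | _ y =>
    induction y using Finsupp.induction_linear with
    | zero => simp
    | add a b ha hb =>
      rw [Submodule.Quotient.mk_add] at *
      simp only [map_add, ha, hb]
    | single g v =>
      rw [indρ_mk_single H E, piQ_mk_single H K E hHK htriv, piQ_mk_single H K E hHK htriv,
        tρ_mul H K E hHK htriv]
      rfl
omit htriv in
lemma mk_single_mul (g : G) (h : H) (w : E) :
    (Submodule.Quotient.mk (Finsupp.single (g * (h : G)) w) : (G →₀ E) ⧸ indRel H E)
      = Submodule.Quotient.mk (Finsupp.single g (E.ρ h w)) := by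
  rw [Submodule.Quotient.eq]
  exact Submodule.subset_span ⟨g, h, w, rfl⟩

/-- The map `v ↦ g ⊗ ρ̃(g)⁻¹ v`. -/
noncomputable def cosetMapFun (g : G) : E →ₗ[F] ((G →₀ E) ⧸ indRel H E) :=
  (indRel H E).mkQ ∘ₗ (Finsupp.lsingle g : E →ₗ[F] (G →₀ E)) ∘ₗ tρ H K E hHK g⁻¹

omit htriv in
lemma cosetMapFun_apply (g : G) (v : E) :
    cosetMapFun H K E hHK g v = Submodule.Quotient.mk (Finsupp.single g (tρ H K E hHK g⁻¹ v)) :=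
  rfl

lemma cosetMapFun_well (a b : G) (hab : (QuotientGroup.leftRel H) a b) :
    cosetMapFun H K E hHK a = cosetMapFun H K E hHK b := by
  rw [QuotientGroup.leftRel_apply] at hab
  set h : H := ⟨a⁻¹ * b, hab⟩ with hh
  have hb : b = a * (h : G) := by simp [hh]
  ext v
  rw [hb, cosetMapFun_apply, cosetMapFun_apply, mk_single_mul H E]
  congr 1
  have : E.ρ h (tρ H K E hHK (a * (h : G))⁻¹ v)
      = (tρ H K E hHK (h : G) * tρ H K E hHK (a * (h : G))⁻¹) v := by
    rw [tρ_coe H K E hHK htriv]; rfl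
  rw [this, ← tρ_mul H K E hHK htriv]
  congr 2
  group

/-- The map `v ↦ g ⊗ ρ̃(g)⁻¹ v` for a coset `gH`. -/
noncomputable def cosetMap : G ⧸ H → (E →ₗ[F] ((G →₀ E) ⧸ indRel H E)) :=
  Quotient.lift (cosetMapFun H K E hHK) (cosetMapFun_well H K E hHK htriv)

lemma cosetMap_mk (g : G) :
    cosetMap H K E hHK htriv (g : G ⧸ H) = cosetMapFun H K E hHK g := rfl

lemma piQ_cosetMap (x : G ⧸ H) (v : E) :
    piQ H K E hHK htriv (cosetMap H K E hHK htriv x v) = v := by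
  induction x using QuotientGroup.induction_on with
  | H g =>
    rw [cosetMap_mk, cosetMapFun_apply, piQ_mk_single H K E hHK htriv,
      tρ_inv_cancel H K E hHK htriv]

lemma cosetMap_smul (g₀ : G) (x : G ⧸ H) (v : E) :
    indρ H E g₀ (cosetMap H K E hHK htriv x v)
      = cosetMap H K E hHK htriv (g₀ • x) (tρ H K E hHK g₀ v) := by
  induction x using QuotientGroup.induction_on with
  | H g =>
    have : g₀ • ((g : G ⧸ H)) = ((g₀ * g : G) : G ⧸ H) := rfl
    rw [cosetMap_mk, cosetMapFun_apply, indρ_mk_single, this, cosetMap_mk, cosetMapFun_apply]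
    congr 1
    have : tρ H K E hHK (g₀ * g)⁻¹ (tρ H K E hHK g₀ v)
        = (tρ H K E hHK (g₀ * g)⁻¹ * tρ H K E hHK g₀) v := rfl
    rw [this, ← tρ_mul H K E hHK htriv]
    congr 2
    group

/-- The averaged splitting `Ẽ → Ind E`. -/
noncomputable def sigma0 [Fintype (G ⧸ H)] : E →ₗ[F] ((G →₀ E) ⧸ indRel H E) :=
  (Nat.card (G ⧸ H) : F)⁻¹ • ∑ x : G ⧸ H, cosetMap H K E hHK htriv x

lemma piQ_sigma0 [Fintype (G ⧸ H)] (hn : (Nat.card (G ⧸ H) : F) ≠ 0) (v : E) :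
    piQ H K E hHK htriv (sigma0 H K E hHK htriv v) = v := by
  rw [sigma0, LinearMap.smul_apply, LinearMap.sum_apply, map_smul, map_sum]
  have : ∀ x : G ⧸ H, piQ H K E hHK htriv (cosetMap H K E hHK htriv x v) = v :=
    piQ_cosetMap H K E hHK htriv (v := v)
  rw [Finset.sum_congr rfl (fun x _ => this x), Finset.sum_const, Finset.card_univ,
    ← Nat.card_eq_fintype_card, ← Nat.cast_smul_eq_nsmul F, smul_smul,
    inv_mul_cancel₀ hn, one_smul]

lemma sigma0_equivariant [Fintype (G ⧸ H)] (g₀ : G) (v : E) :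
    indρ H E g₀ (sigma0 H K E hHK htriv v) = sigma0 H K E hHK htriv (tρ H K E hHK g₀ v) := by
  rw [sigma0, LinearMap.smul_apply, LinearMap.sum_apply, map_smul, map_sum,
    LinearMap.smul_apply, LinearMap.sum_apply]
  congr 1
  rw [Finset.sum_congr rfl (fun x _ => cosetMap_smul H K E hHK htriv g₀ x v)]
  exact Fintype.sum_bijective (fun x => g₀ • x) (MulAction.bijective g₀)
    _ _ (fun x => rfl)

lemma split_add [Fintype (G ⧸ H)] (x : (G →₀ E) ⧸ indRel H E) :
    sigma0 H K E hHK htriv (piQ H K E hHK htriv x)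
      + (x - sigma0 H K E hHK htriv (piQ H K E hHK htriv x)) = x :=
  add_sub_cancel _ _

lemma bcomm [Fintype (G ⧸ H)] (g : G) (x : (G →₀ E) ⧸ indRel H E) :
    indρ H E g x - sigma0 H K E hHK htriv (piQ H K E hHK htriv (indρ H E g x))
      = indρ H E g (x - sigma0 H K E hHK htriv (piQ H K E hHK htriv x)) := by
  rw [map_sub, piQ_equivariant H K E hHK htriv, ← sigma0_equivariant H K E hHK htriv]

lemma s3lem [Fintype (G ⧸ H)] (hn : (Nat.card (G ⧸ H) : F) ≠ 0) (v : E) :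
    sigma0 H K E hHK htriv v
      - sigma0 H K E hHK htriv (piQ H K E hHK htriv (sigma0 H K E hHK htriv v)) = 0 := by
  rw [piQ_sigma0 H K E hHK htriv hn, sub_self]

lemma s5lem [Fintype (G ⧸ H)] (x : (G →₀ E) ⧸ indRel H E)
    (hx : piQ H K E hHK htriv x = 0) :
    x - sigma0 H K E hHK htriv (piQ H K E hHK htriv x) = x := by
  rw [hx, map_zero, sub_zero]
end

lemma card_quot_eq (H K : Subgroup G) (hHK : (H : Set G) * (K : Set G) = Set.univ) :
    (H ⊓ K).relIndex K = Nat.card (G ⧸ H) := by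
  rw [Subgroup.relIndex, Subgroup.index_eq_card]
  refine Nat.card_congr (Equiv.ofBijective
    (Quotient.lift (fun k : K => ((k : G) : G ⧸ H)) ?_) ⟨?_, ?_⟩)
  · intro a b hab
    replace hab : (QuotientGroup.leftRel ((H ⊓ K).subgroupOf K)) a b := hab
    rw [QuotientGroup.leftRel_apply, Subgroup.mem_subgroupOf] at hab
    exact (QuotientGroup.eq).2 hab.1
  · intro a b
    induction a using Quotient.ind with | _ k₁ => ?_
    induction b using Quotient.ind with | _ k₂ => ?_
    intro hab
    have h1 : ((k₁ : G))⁻¹ * (k₂ : G) ∈ H := (QuotientGroup.eq).1 hab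
    refine Quotient.sound ?_
    show (QuotientGroup.leftRel ((H ⊓ K).subgroupOf K)) k₁ k₂
    rw [QuotientGroup.leftRel_apply, Subgroup.mem_subgroupOf]
    exact ⟨h1, K.mul_mem (K.inv_mem k₁.2) k₂.2⟩
  · intro y
    induction y using QuotientGroup.induction_on with
    | H g =>
      obtain ⟨h, hh⟩ := exists_decomp H K hHK g⁻¹
      refine ⟨Quotient.mk _ ⟨((h : G)⁻¹ * g⁻¹)⁻¹, K.inv_mem hh⟩, ?_⟩
      show (((((h : G))⁻¹ * g⁻¹)⁻¹ : G) : G ⧸ H) = (g : G ⧸ H)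
      refine (QuotientGroup.eq).2 ?_
      simp only [mul_inv_rev, inv_inv, inv_mul_cancel_right]
      exact H.inv_mem h.2


lemma rep_isZero_iff {G : Type} [Group G] (M : Rep F G) : IsZero M ↔ Subsingleton M :=
  Rep.isZero_iff (M := M)

/-- let `charF = p`, `H ≤ G`, `K ⊴ G` with `G = HK` and `p ∤ [K : H ∩ K]`,
and let `E` be a finite-dimensional `F[H]`-module on which `H ∩ K` acts trivially.
Then `Ind_H^G E ≅ Y ⊞ Y'` where `K` acts trivially on `Y`, the restriction of `Y` to
`H` is isomorphic to `E`, and `Y` is indecomposable whenever `E` is. -/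
theorem stmt7 (p : ℕ) (hp : p.Prime) (F : Type) [Field F] [CharP F p]
    (G : Type) [Group G] [Finite G] (H K : Subgroup G) [K.Normal]
    (hHK : (H : Set G) * (K : Set G) = Set.univ)
    (hindex : ¬ p ∣ (H ⊓ K).relIndex K)
    (E : Rep F H) [FiniteDimensional F E]
    (htriv : ∀ h : H, (h : G) ∈ K → E.ρ h = 1) :
    ∃ Y Y' : Rep F G,
      Nonempty (ind H E ≅ Y ⊞ Y') ∧
      (∀ k ∈ K, Y.ρ k = 1) ∧
      Nonempty ((Rep.resFunctor H.subtype).obj Y ≅ E) ∧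
      (RepIndecomposable E → RepIndecomposable Y) := by
  classical
  letI : Fintype (G ⧸ H) := Fintype.ofFinite _
  have hn : (Nat.card (G ⧸ H) : F) ≠ 0 := by
    rw [Ne, CharP.cast_eq_zero_iff F p, ← card_quot_eq H K hHK]
    exact hindex
  set W : Submodule F ((G →₀ E) ⧸ indRel H E) := LinearMap.ker (piQ H K E hHK htriv) with hW
  have hstab : ∀ (g₀ : G), ∀ x ∈ W, indρ H E g₀ x ∈ W := by
    intro g₀ x hx
    rw [hW, LinearMap.mem_ker] at hx ⊢
    rw [piQ_equivariant H K E hHK htriv, hx, map_zero]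
  let ρ' : Representation F G W :=
    { toFun := fun g₀ => (indρ H E g₀).restrict (hstab g₀)
      map_one' := by
        apply LinearMap.ext; intro x; apply Subtype.ext
        simp only [LinearMap.restrict_apply, map_one (indρ H E)]
        rfl
      map_mul' := fun g₁ g₂ => by
        apply LinearMap.ext; intro x; apply Subtype.ext
        simp only [LinearMap.restrict_apply, map_mul (indρ H E), Module.End.mul_apply] }
  let Y : Rep F G := Rep.of (tRep H K E hHK htriv)
  let Y' : Rep F G := Rep.of ρ'
  let aHom : ind H E ⟶ Y :=
    Rep.ofHom ⟨piQ H K E hHK htriv,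
      fun g => LinearMap.ext fun x => piQ_equivariant H K E hHK htriv g x⟩
  let iHom : Y ⟶ ind H E :=
    Rep.ofHom ⟨sigma0 H K E hHK htriv,
      fun g => LinearMap.ext fun v => (sigma0_equivariant H K E hHK htriv g v).symm⟩
  let bLin : ((G →₀ E) ⧸ indRel H E) →ₗ[F] W :=
    LinearMap.codRestrict W
      (LinearMap.id - (sigma0 H K E hHK htriv) ∘ₗ (piQ H K E hHK htriv)) (fun x => by
        rw [hW, LinearMap.mem_ker]
        simp only [LinearMap.sub_apply, LinearMap.id_apply, LinearMap.comp_apply, map_sub]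
        rw [piQ_sigma0 H K E hHK htriv hn]
        exact sub_self _)
  let bHom : ind H E ⟶ Y' :=
    Rep.ofHom ⟨bLin,
      fun g => LinearMap.ext fun x => Subtype.ext (bcomm H K E hHK htriv g x)⟩
  let jHom : Y' ⟶ ind H E :=
    Rep.ofHom ⟨W.subtype,
      fun g => rfl⟩
  have h1 : aHom ≫ iHom + bHom ≫ jHom = 𝟙 (ind H E) := by
    apply Rep.hom_ext
    apply Representation.IntertwiningMap.ext
    apply LinearMap.ext; intro x
    exact split_add H K E hHK htriv x
  have h2 : iHom ≫ aHom = 𝟙 Y :=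
    Rep.hom_ext (Representation.IntertwiningMap.ext (LinearMap.ext fun v => piQ_sigma0 H K E hHK htriv hn v))
  have h3 : iHom ≫ bHom = 0 := by
    apply Rep.hom_ext
    apply Representation.IntertwiningMap.ext
    apply LinearMap.ext; intro v
    apply Subtype.ext
    exact s3lem H K E hHK htriv hn v
  have h4 : jHom ≫ aHom = 0 := by
    apply Rep.hom_ext
    apply Representation.IntertwiningMap.ext
    apply LinearMap.ext; intro x
    exact x.2
  have h5 : jHom ≫ bHom = 𝟙 Y' := by
    apply Rep.hom_ext
    apply Representation.IntertwiningMap.ext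
    apply LinearMap.ext; intro x
    apply Subtype.ext
    exact s5lem H K E hHK htriv x.1 x.2
  have iso : ind H E ≅ Y ⊞ Y' :=
    { hom := biprod.lift aHom bHom
      inv := biprod.desc iHom jHom
      hom_inv_id := by rw [biprod.lift_desc, h1]
      inv_hom_id := by
        apply biprod.hom_ext' <;> apply biprod.hom_ext <;>
          simp [h2, h3, h4, h5] }
  have resIso : (Rep.resFunctor H.subtype).obj Y ≅ E := by
    refine { hom := Rep.ofHom (σ := E.ρ) ⟨LinearMap.id, fun h => ?_⟩,
             inv := Rep.ofHom (ρ := E.ρ) ⟨LinearMap.id, fun h => ?_⟩,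
             hom_inv_id := rfl, inv_hom_id := rfl }
    · rw [LinearMap.id_comp, LinearMap.comp_id]; exact tρ_coe H K E hHK htriv h
    · rw [LinearMap.id_comp, LinearMap.comp_id]; exact (tρ_coe H K E hHK htriv h).symm
  refine ⟨Y, Y', ⟨iso⟩, fun k hk => tρ_mem H K E hHK htriv k hk, ⟨resIso⟩, fun hE => ?_⟩
  constructor
  · intro hzero
    apply hE.1
    rw [rep_isZero_iff] at hzero ⊢
    exact hzero
  · rintro X Z ⟨i⟩
    haveI : PreservesBinaryBiproducts (Rep.resFunctor (k := F) H.subtype) :=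
      preservesBinaryBiproducts_of_preservesBiproducts _
    let R := Rep.resFunctor (k := F) H.subtype
    have i2 : E ≅ R.obj X ⊞ R.obj Z :=
      resIso.symm ≪≫ R.mapIso i ≪≫ Functor.mapBiprod R X Z
    rcases hE.2 _ _ ⟨i2⟩ with hz | hz
    · left; rw [rep_isZero_iff] at hz ⊢; exact hz
    · right; rw [rep_isZero_iff] at hz ⊢; exact hz
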